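/- Self-normalized concentration (Peña–Klass–Lai): let A and B be random variables on a probability space with B > 0 almost surely, and suppose E[exp(λA − (λ²/2)B²)] ≤ 1 for every λ ∈ ℝ. Then for every δ ∈ (0, 1/e] and every β > 0, P( |A| ≥ √( (B² + β)·(2 + log(B²/β + 1))·log(1/δ) ) ) ≤ δ. -/

import Mathlib

open MeasureTheory

open Real


lemma gauss_integrable (c a : ℝ) (hc : 0 < c) :
    Integrable (fun x : ℝ => Real.exp (-(c/2) * x^2 + a*x)) := by
  have h : (fun x : ℝ => Real.exp (-(c/2) * x^2 + a*x))
      = fun x => Real.exp (a^2/(2*c)) * Real.exp (-(c/2) * (x - a/c)^2) := by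
    funext x
    rw [← Real.exp_add]
    congr 1
    field_simp
    ring
  rw [h]
  exact ((integrable_exp_neg_mul_sq (half_pos hc)).comp_sub_right (a/c)).const_mul _

lemma gauss_int (c a : ℝ) (hc : 0 < c) :
    ∫ x : ℝ, Real.exp (-(c/2) * x^2 + a*x)
      = Real.sqrt (2*π/c) * Real.exp (a^2/(2*c)) := by
  have h : (fun x : ℝ => Real.exp (-(c/2) * x^2 + a*x))
      = fun x => Real.exp (a^2/(2*c)) * Real.exp (-(c/2) * (x - a/c)^2) := by
    funext x
    rw [← Real.exp_add]
    congr 1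
    field_simp
    ring
  rw [h, MeasureTheory.integral_const_mul]
  rw [integral_sub_right_eq_self (fun x => Real.exp (-(c/2) * x^2)) (a/c)]
  rw [integral_gaussian]
  rw [mul_comm]
  congr 2
  field_simp

lemma mix_fun_eq (β a b : ℝ) :
    (fun l : ℝ => (Real.sqrt (β/(2*π)) * Real.exp (-(β/2) * l^2))
        * Real.exp (l * a - l^2/2 * b^2))
      = fun l : ℝ => Real.sqrt (β/(2*π)) * Real.exp (-((b^2+β)/2) * l^2 + a*l) := by
  funext l
  rw [mul_assoc, ← Real.exp_add]
  congr 2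
  ring

lemma mix_integrable (β a b : ℝ) (hβ : 0 < β) :
    Integrable (fun l : ℝ => (Real.sqrt (β/(2*π)) * Real.exp (-(β/2) * l^2))
        * Real.exp (l * a - l^2/2 * b^2)) := by
  rw [mix_fun_eq]
  exact (gauss_integrable (b^2+β) a (by positivity)).const_mul _

lemma mix_eq (β a b : ℝ) (hβ : 0 < β) :
    ∫ l : ℝ, (Real.sqrt (β/(2*π)) * Real.exp (-(β/2) * l^2))
        * Real.exp (l * a - l^2/2 * b^2)
      = Real.sqrt (β/(b^2+β)) * Real.exp (a^2/(2*(b^2+β))) := by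
  rw [mix_fun_eq, MeasureTheory.integral_const_mul, gauss_int _ _ (by positivity : (0:ℝ) < b^2+β)]
  rw [← mul_assoc, ← Real.sqrt_mul (by positivity)]
  congr 2
  have hs : (0:ℝ) < b^2 + β := by positivity
  field_simp

lemma density_total (β : ℝ) (hβ : 0 < β) :
    ∫ l : ℝ, Real.sqrt (β/(2*π)) * Real.exp (-(β/2) * l^2) = 1 := by
  rw [MeasureTheory.integral_const_mul, integral_gaussian, ← Real.sqrt_mul (by positivity)]
  rw [show β/(2*π) * (π/(β/2)) = 1 by
    field_simp]
  exact Real.sqrt_one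

lemma tail_ineq (δ β a b : ℝ) (hδ0 : 0 < δ) (hδ1 : δ ≤ (Real.exp 1)⁻¹) (hβ : 0 < β)
    (h : Real.sqrt ((b^2+β) * (2 + Real.log (b^2/β+1)) * Real.log (1/δ)) ≤ |a|) :
    1/δ ≤ Real.sqrt (β/(b^2+β)) * Real.exp (a^2/(2*(b^2+β))) := by
  set s : ℝ := b^2 + β with hs
  have hs0 : 0 < s := by positivity
  set r : ℝ := Real.log (b^2/β+1) with hr
  set L : ℝ := Real.log (1/δ) with hL
  have hr0 : 0 ≤ r := Real.log_nonneg (le_add_of_nonneg_left (by positivity))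
  have hL1 : 1 ≤ L := by
    have h1 : Real.exp 1 ≤ 1/δ := by
      rw [le_div_iff₀ hδ0]
      calc Real.exp 1 * δ ≤ Real.exp 1 * (Real.exp 1)⁻¹ := by gcongr
        _ = 1 := mul_inv_cancel₀ (Real.exp_ne_zero 1)
    calc (1:ℝ) = Real.log (Real.exp 1) := (Real.log_exp 1).symm
      _ ≤ L := Real.log_le_log (Real.exp_pos 1) h1
  have hXnn : 0 ≤ s * (2 + r) * L := by positivity
  have hX : s * (2 + r) * L ≤ a^2 := by
    calc s * (2 + r) * L = Real.sqrt (s * (2 + r) * L) ^ 2 := (Real.sq_sqrt hXnn).symm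
      _ ≤ |a| ^ 2 := pow_le_pow_left₀ (Real.sqrt_nonneg _) h 2
      _ = a ^ 2 := sq_abs a
  have hkey : L + r/2 ≤ a^2 / (2*s) := by
    rw [le_div_iff₀ (by positivity)]
    nlinarith [mul_nonneg (mul_nonneg hs0.le hr0) (sub_nonneg.mpr hL1)]
  have hsb : b^2/β + 1 = s/β := by field_simp; exact hs.symm
  have hexp_r : Real.exp r = s/β := by rw [hr, hsb, Real.exp_log (by positivity)]
  have hsqrt : Real.sqrt (s/β) = Real.exp (r/2) := by
    rw [show s/β = Real.exp (r/2) ^ 2 by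
      rw [sq, ← Real.exp_add]; rw [show r/2 + r/2 = r by ring, hexp_r]]
    exact Real.sqrt_sq (Real.exp_pos _).le
  have hprod : Real.sqrt (β/s) * Real.sqrt (s/β) = 1 := by
    rw [← Real.sqrt_mul (by positivity), show β/s * (s/β) = 1 by field_simp, Real.sqrt_one]
  have heq : (1:ℝ)/δ = Real.sqrt (β/s) * Real.exp (L + r/2) := by
    rw [Real.exp_add, Real.exp_log (by positivity : (0:ℝ) < 1/δ), ← hsqrt]
    rw [mul_comm (1/δ) (Real.sqrt (s/β)), ← mul_assoc, hprod, one_mul]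
  calc (1:ℝ)/δ = Real.sqrt (β/s) * Real.exp (L + r/2) := heq
    _ ≤ Real.sqrt (β/s) * Real.exp (a^2/(2*s)) :=
        mul_le_mul_of_nonneg_left (Real.exp_le_exp.mpr hkey) (Real.sqrt_nonneg _)

/-- Self-normalized concentration (Peña–Klass–Lai): if `B > 0` a.s. and
`E[exp(λA − (λ²/2)B²)] ≤ 1` for every `λ ∈ ℝ`, then for every `δ ∈ (0, 1/e]` and
`β > 0`, `P(|A| ≥ √((B² + β)(2 + log(B²/β + 1)) log(1/δ))) ≤ δ`. -/
theorem pena_klass_lai_self_normalized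
    {Ω : Type*} [MeasurableSpace Ω] (μ : Measure Ω) [IsProbabilityMeasure μ]
    (A B : Ω → ℝ) (hA : Measurable A) (hB : Measurable B)
    (hBpos : ∀ᵐ ω ∂μ, 0 < B ω)
    (hexp : ∀ l : ℝ,
      ∫⁻ ω, ENNReal.ofReal (Real.exp (l * A ω - l ^ 2 / 2 * (B ω) ^ 2)) ∂μ ≤ 1)
    (δ β : ℝ) (hδ0 : 0 < δ) (hδ1 : δ ≤ (Real.exp 1)⁻¹) (hβ : 0 < β) :
    μ {ω | Real.sqrt (((B ω) ^ 2 + β) * (2 + Real.log ((B ω) ^ 2 / β + 1)) *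
        Real.log (1 / δ)) ≤ |A ω|} ≤ ENNReal.ofReal δ := by
  classical
  -- the mixture random variable
  set Y : Ω → ℝ := fun ω =>
    Real.sqrt (β / ((B ω)^2 + β)) * Real.exp ((A ω)^2 / (2 * ((B ω)^2 + β))) with hYdef
  have hsmeas : Measurable fun ω => (B ω)^2 + β := (hB.pow_const 2).add_const β
  have hYmeas : Measurable Y := by
    apply Measurable.mul
    · exact Real.continuous_sqrt.measurable.comp (measurable_const.div hsmeas)
    · exact Real.measurable_exp.comp ((hA.pow_const 2).div (measurable_const.mul hsmeas))
  -- Step 1 : E[Y] ≤ 1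
  have hY1 : ∫⁻ ω, ENNReal.ofReal (Y ω) ∂μ ≤ 1 := by
    have hmeas2 : Measurable fun p : Ω × ℝ =>
        ENNReal.ofReal ((Real.sqrt (β/(2*π)) * Real.exp (-(β/2) * p.2^2))
          * Real.exp (p.2 * A p.1 - p.2^2/2 * (B p.1)^2)) := by
      apply ENNReal.measurable_ofReal.comp
      apply Measurable.mul
      · exact (Real.measurable_exp.comp
          ((measurable_snd.pow_const 2).const_mul (-(β/2)))).const_mul _
      · exact Real.measurable_exp.comp
          ((measurable_snd.mul (hA.comp measurable_fst)).sub
            (((measurable_snd.pow_const 2).div_const 2).mul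
              ((hB.comp measurable_fst).pow_const 2)))
    calc ∫⁻ ω, ENNReal.ofReal (Y ω) ∂μ
        = ∫⁻ ω, ∫⁻ l, ENNReal.ofReal ((Real.sqrt (β/(2*π)) * Real.exp (-(β/2) * l^2))
            * Real.exp (l * A ω - l^2/2 * (B ω)^2)) ∂volume ∂μ := by
          refine lintegral_congr fun ω => ?_
          simp only [hYdef]
          rw [← mix_eq β (A ω) (B ω) hβ]
          exact MeasureTheory.ofReal_integral_eq_lintegral_ofReal
            (mix_integrable β (A ω) (B ω) hβ)
            (Filter.Eventually.of_forall fun l => by positivity)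
      _ = ∫⁻ l, ∫⁻ ω, ENNReal.ofReal ((Real.sqrt (β/(2*π)) * Real.exp (-(β/2) * l^2))
            * Real.exp (l * A ω - l^2/2 * (B ω)^2)) ∂μ ∂volume :=
          lintegral_lintegral_swap hmeas2.aemeasurable
      _ ≤ ∫⁻ l, ENNReal.ofReal (Real.sqrt (β/(2*π)) * Real.exp (-(β/2) * l^2)) ∂volume := by
          refine lintegral_mono fun l => ?_
          calc ∫⁻ ω, ENNReal.ofReal ((Real.sqrt (β/(2*π)) * Real.exp (-(β/2) * l^2))
                * Real.exp (l * A ω - l^2/2 * (B ω)^2)) ∂μ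
              = ENNReal.ofReal (Real.sqrt (β/(2*π)) * Real.exp (-(β/2) * l^2)) *
                ∫⁻ ω, ENNReal.ofReal (Real.exp (l * A ω - l^2/2 * (B ω)^2)) ∂μ := by
                simp_rw [ENNReal.ofReal_mul (by positivity :
                  (0:ℝ) ≤ Real.sqrt (β/(2*π)) * Real.exp (-(β/2) * l^2))]
                exact lintegral_const_mul' _ _ ENNReal.ofReal_ne_top
            _ ≤ ENNReal.ofReal (Real.sqrt (β/(2*π)) * Real.exp (-(β/2) * l^2)) * 1 := by
                refine mul_le_mul_of_nonneg_left ?_ (zero_le')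
                have := hexp l
                simpa [div_mul_eq_mul_div, mul_comm, mul_div_assoc] using this
            _ = ENNReal.ofReal (Real.sqrt (β/(2*π)) * Real.exp (-(β/2) * l^2)) := mul_one _
      _ = ENNReal.ofReal (∫ l, Real.sqrt (β/(2*π)) * Real.exp (-(β/2) * l^2)) :=
          (MeasureTheory.ofReal_integral_eq_lintegral_ofReal
            ((integrable_exp_neg_mul_sq (half_pos hβ)).const_mul _)
            (Filter.Eventually.of_forall fun l => by positivity)).symm
      _ = 1 := by rw [density_total β hβ, ENNReal.ofReal_one]
  -- Step 2 : a.e. event inclusion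
  have hmono : {ω | Real.sqrt (((B ω) ^ 2 + β) * (2 + Real.log ((B ω) ^ 2 / β + 1)) *
        Real.log (1 / δ)) ≤ |A ω|} ≤ᵐ[μ]
      {ω | ENNReal.ofReal (1/δ) ≤ ENNReal.ofReal (Y ω)} := by
    filter_upwards [hBpos] with ω hb hω
    exact ENNReal.ofReal_le_ofReal (tail_ineq δ β (A ω) (B ω) hδ0 hδ1 hβ hω)
  -- Step 3 : Markov
  have hmark := mul_meas_ge_le_lintegral₀ (μ := μ)
    ((ENNReal.measurable_ofReal.comp hYmeas :
      Measurable fun ω => ENNReal.ofReal (Y ω)).aemeasurable) (ENNReal.ofReal (1/δ))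
  have hmark2 : ENNReal.ofReal (1/δ) *
      μ {ω | ENNReal.ofReal (1/δ) ≤ ENNReal.ofReal (Y ω)} ≤ 1 := le_trans hmark hY1
  have hne0 : ENNReal.ofReal (1/δ) ≠ 0 := (ENNReal.ofReal_pos.mpr (by positivity)).ne'
  have hfin : μ {ω | ENNReal.ofReal (1/δ) ≤ ENNReal.ofReal (Y ω)} ≤ ENNReal.ofReal δ := by
    have h2 : μ {ω | ENNReal.ofReal (1/δ) ≤ ENNReal.ofReal (Y ω)} ≤
        1 / ENNReal.ofReal (1/δ) :=
      (ENNReal.le_div_iff_mul_le (Or.inl hne0) (Or.inl ENNReal.ofReal_ne_top)).mpr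
        (by rwa [mul_comm])
    calc μ {ω | ENNReal.ofReal (1/δ) ≤ ENNReal.ofReal (Y ω)} ≤ 1 / ENNReal.ofReal (1/δ) := h2
      _ = ENNReal.ofReal δ := by
          rw [one_div, one_div, ← ENNReal.ofReal_inv_of_pos (by positivity), inv_inv]
  exact le_trans (measure_mono_ae hmono) hfin
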